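/- arXiv:2601.14486 — 2 statements merged into one kernel-verified Lean document; each statement's English description precedes it below -/
import Mathlib

section
/- Let Φ be an N-function satisfying the doubling condition such that ∫₁^∞ Φ(t)/t³ dt < ∞. Let I_{n,k}, k = 1,…,2ⁿ, be the dyadic subarcs of the unit circle of length 2π·2^{-n} at generation n, and let φ : ∂𝔻 → ∂𝔻 be any homeomorphism. Then ∑_{n=1}^∞ ∑_{k=1}^{2ⁿ} Φ(|φ(I_{n,k})| · 2ⁿ) · 2^{-2n} < ∞, where |φ(I_{n,k})| denotes the arclength of the image arc. -/
open MeasureTheory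

-- two-term superadditivity
private lemma sup2 (Φ : ℝ → ℝ) (hconv : ConvexOn ℝ (Set.Ici (0:ℝ)) Φ) (h0 : Φ 0 = 0)
    {a b : ℝ} (ha : 0 ≤ a) (hb : 0 ≤ b) : Φ a + Φ b ≤ Φ (a + b) := by
  rcases eq_or_lt_of_le (by positivity : (0:ℝ) ≤ a + b) with h | h
  · have ha0 : a = 0 := by linarith [hb]
    have hb0 : b = 0 := by linarith [ha]
    simp [ha0, hb0, h0]
  · have hs : a + b ∈ Set.Ici (0:ℝ) := le_of_lt h
    have h1 : Φ a ≤ (a / (a+b)) * Φ (a+b) := by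
      have h3 := hconv.2 hs (Set.mem_Ici.2 le_rfl) (by positivity : 0 ≤ a/(a+b))
        (by positivity : 0 ≤ b/(a+b)) (by field_simp)
      rw [show (a/(a+b)) • (a+b) + (b/(a+b)) • (0:ℝ) = a by simp only [smul_eq_mul]; field_simp; ring] at h3
      simpa [h0, smul_eq_mul] using h3
    have h2 : Φ b ≤ (b / (a+b)) * Φ (a+b) := by
      have h3 := hconv.2 hs (Set.mem_Ici.2 le_rfl) (by positivity : 0 ≤ b/(a+b))
        (by positivity : 0 ≤ a/(a+b)) (by field_simp; ring)
      rw [show (b/(a+b)) • (a+b) + (a/(a+b)) • (0:ℝ) = b by simp only [smul_eq_mul]; field_simp; ring] at h3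
      simpa [h0, smul_eq_mul] using h3
    have : (a/(a+b)) * Φ (a+b) + (b/(a+b)) * Φ (a+b) = Φ (a+b) := by
      field_simp
    linarith

private lemma supsum (Φ : ℝ → ℝ) (hconv : ConvexOn ℝ (Set.Ici (0:ℝ)) Φ) (h0 : Φ 0 = 0)
    {ι : Type*} (s : Finset ι) (f : ι → ℝ) (hf : ∀ i ∈ s, 0 ≤ f i) :
    ∑ i ∈ s, Φ (f i) ≤ Φ (∑ i ∈ s, f i) := by
  induction s using Finset.cons_induction with
  | empty => simp [h0]
  | cons a s has ih =>
    rw [Finset.sum_cons, Finset.sum_cons]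
    have hfa := hf a (Finset.mem_cons_self a s)
    have hsum : 0 ≤ ∑ i ∈ s, f i :=
      Finset.sum_nonneg fun i hi => hf i (Finset.mem_cons_of_mem hi)
    calc Φ (f a) + ∑ i ∈ s, Φ (f i) ≤ Φ (f a) + Φ (∑ i ∈ s, f i) := by
          linarith [ih fun i hi => hf i (Finset.mem_cons_of_mem hi)]
      _ ≤ Φ (f a + ∑ i ∈ s, f i) := sup2 Φ hconv h0 hfa hsum


private lemma sumdelta (ψ : ℝ → ℝ) (hψm : StrictMono ψ ∨ StrictAnti ψ)
    (hper : (∀ θ, ψ (θ + 2 * Real.pi) = ψ θ + 2 * Real.pi) ∨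
            (∀ θ, ψ (θ + 2 * Real.pi) = ψ θ - 2 * Real.pi)) (N : ℕ) :
    ∑ k ∈ Finset.range (2 ^ N),
      |ψ (2 * Real.pi * ((k : ℝ) + 1) / 2 ^ N) - ψ (2 * Real.pi * (k : ℝ) / 2 ^ N)| =
      2 * Real.pi := by
  have hpi := Real.pi_pos
  set u : ℕ → ℝ := fun k => ψ (2 * Real.pi * (k : ℝ) / 2 ^ N) with hu
  have huN : u (2 ^ N) = ψ (2 * Real.pi) := by
    simp only [hu]
    congr 1
    push_cast
    field_simp
  have hu0 : u 0 = ψ 0 := by simp [hu]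
  have hstep : ∀ k : ℕ, (2 * Real.pi * (k : ℝ) / 2 ^ N) < 2 * Real.pi * ((k:ℝ) + 1) / 2 ^ N := by
    intro k
    have h2 : (0:ℝ) < 2 ^ N := by positivity
    have : 2 * Real.pi * (k : ℝ) < 2 * Real.pi * ((k:ℝ) + 1) := by nlinarith
    exact div_lt_div_of_pos_right this h2
  have hucast : ∀ k : ℕ, ψ (2 * Real.pi * ((k:ℝ) + 1) / 2 ^ N) = u (k + 1) := by
    intro k; simp only [hu]; push_cast; ring_nf
  have h2pi : ψ (2 * Real.pi) = ψ (0 + 2 * Real.pi) := by norm_num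
  rcases hψm with hm | hm
  · rcases hper with hp | hp
    · have habs : ∀ k ∈ Finset.range (2 ^ N),
          |ψ (2 * Real.pi * ((k : ℝ) + 1) / 2 ^ N) - ψ (2 * Real.pi * (k : ℝ) / 2 ^ N)| =
          u (k+1) - u k := by
        intro k _
        rw [hucast k]
        exact abs_of_nonneg (sub_nonneg.2 (le_of_lt (hm (by push_cast; exact hstep k))))
      rw [Finset.sum_congr rfl habs, Finset.sum_range_sub, huN, hu0, h2pi, hp 0]
      ring
    · exfalso
      have h1 : ψ 0 < ψ (2 * Real.pi) := hm (by positivity)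
      rw [h2pi, hp 0] at h1; linarith
  · rcases hper with hp | hp
    · exfalso
      have h1 : ψ (2 * Real.pi) < ψ 0 := hm (by positivity)
      rw [h2pi, hp 0] at h1; linarith
    · have habs : ∀ k ∈ Finset.range (2 ^ N),
          |ψ (2 * Real.pi * ((k : ℝ) + 1) / 2 ^ N) - ψ (2 * Real.pi * (k : ℝ) / 2 ^ N)| =
          u k - u (k+1) := by
        intro k _
        rw [hucast k]
        rw [abs_sub_comm]
        exact abs_of_nonneg (sub_nonneg.2 (le_of_lt (hm (by push_cast; exact hstep k))))
      rw [Finset.sum_congr rfl habs, Finset.sum_range_sub' u, huN, hu0, h2pi, hp 0]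
      ring


private lemma intsum (Φ : ℝ → ℝ) (hmono : MonotoneOn Φ (Set.Ici (0:ℝ))) (hnn : ∀ t, 0 ≤ Φ t)
    (hint : (∫⁻ t in Set.Ioi (1 : ℝ), ENNReal.ofReal (Φ t / t ^ 3)) < ⊤) :
    Summable fun n : ℕ => Φ ((2:ℝ) ^ n) * (2:ℝ) ^ (-2 * (n : ℤ)) := by
  set F : ℝ → ENNReal := fun t => ENNReal.ofReal (Φ t / t ^ 3) with hF
  set g : ℕ → ℝ := fun n => Φ ((2:ℝ) ^ n) * (2:ℝ) ^ (-2 * (n : ℤ)) with hg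
  have hgnn : ∀ n, 0 ≤ g n := by
    intro n
    have := hnn ((2:ℝ) ^ n)
    positivity
  have key : ∀ n : ℕ, ENNReal.ofReal (g n / 8) ≤
      ∫⁻ t in Set.Ioc ((2:ℝ) ^ n) ((2:ℝ) ^ (n+1)), F t := by
    intro n
    set a : ℝ := (2:ℝ) ^ n with ha
    set b : ℝ := (2:ℝ) ^ (n+1) with hb
    have ha0 : (0:ℝ) < a := by positivity
    have hab : a < b := by
      rw [ha, hb]; exact pow_lt_pow_right₀ (by norm_num) (by omega)
    have hc0 : 0 ≤ Φ a / b ^ 3 := by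
      have := hnn a; positivity
    have hpt : ∀ t ∈ Set.Ioc a b, ENNReal.ofReal (Φ a / b ^ 3) ≤ F t := by
      intro t ht
      apply ENNReal.ofReal_le_ofReal
      have ht0 : 0 < t := lt_trans ha0 ht.1
      have h1 : Φ a ≤ Φ t := hmono (Set.mem_Ici.2 ha0.le) (Set.mem_Ici.2 ht0.le) ht.1.le
      have h2 : t ^ 3 ≤ b ^ 3 := pow_le_pow_left₀ ht0.le ht.2 3
      calc Φ a / b ^ 3 ≤ Φ t / b ^ 3 := by gcongr
        _ ≤ Φ t / t ^ 3 := by gcongr; exact hnn t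
    calc ENNReal.ofReal (g n / 8)
        = ENNReal.ofReal ((Φ a / b ^ 3) * (b - a)) := by
          congr 1
          show Φ ((2:ℝ)^n) * (2:ℝ)^(-2*(n:ℤ)) / 8 =
            Φ ((2:ℝ)^n) / ((2:ℝ)^(n+1))^3 * ((2:ℝ)^(n+1) - (2:ℝ)^n)
          have h1 : ((2:ℝ)) ^ (-2 * (n : ℤ)) = ((2:ℝ) ^ (2 * n))⁻¹ := by
            rw [show (-2 * (n:ℤ)) = -((2*n : ℕ) : ℤ) by push_cast; ring, zpow_neg,
              zpow_natCast]
          rw [h1]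
          have h2 : ((2:ℝ) ^ (n+1)) ^ 3 ≠ 0 := by positivity
          field_simp
          ring
      _ = ENNReal.ofReal (Φ a / b ^ 3) * ENNReal.ofReal (b - a) := ENNReal.ofReal_mul hc0
      _ = ENNReal.ofReal (Φ a / b ^ 3) * volume (Set.Ioc a b) := by rw [Real.volume_Ioc]
      _ = ∫⁻ _ in Set.Ioc a b, ENNReal.ofReal (Φ a / b ^ 3) := (setLIntegral_const _ _).symm
      _ ≤ ∫⁻ t in Set.Ioc a b, F t :=
          lintegral_mono_ae (ae_restrict_of_forall_mem measurableSet_Ioc hpt)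
  have claim : ∀ m : ℕ, ∑ n ∈ Finset.range m, ENNReal.ofReal (g n / 8) ≤
      ∫⁻ t in Set.Ioc (1:ℝ) ((2:ℝ) ^ m), F t := by
    intro m
    induction m with
    | zero => simp
    | succ m ih =>
      have h1 : (1:ℝ) ≤ (2:ℝ) ^ m := one_le_pow₀ (by norm_num)
      have h2 : (2:ℝ) ^ m ≤ (2:ℝ) ^ (m+1) := by
        apply pow_le_pow_right₀ (by norm_num) (by omega)
      rw [Finset.sum_range_succ, ← Set.Ioc_union_Ioc_eq_Ioc h1 h2,
        lintegral_union measurableSet_Ioc (Set.Ioc_disjoint_Ioc_of_le le_rfl)]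
      exact add_le_add ih (key m)
  have hreal : ∀ m : ℕ, ∑ n ∈ Finset.range m, g n ≤
      8 * (∫⁻ t in Set.Ioi (1:ℝ), F t).toReal := by
    intro m
    have h1 : ∑ n ∈ Finset.range m, g n / 8 ≤ (∫⁻ t in Set.Ioi (1:ℝ), F t).toReal := by
      rw [← ENNReal.ofReal_le_iff_le_toReal hint.ne,
        ENNReal.ofReal_sum_of_nonneg (fun i _ => by linarith [hgnn i])]
      calc ∑ n ∈ Finset.range m, ENNReal.ofReal (g n / 8)
          ≤ ∫⁻ t in Set.Ioc (1:ℝ) ((2:ℝ) ^ m), F t := claim m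
        _ ≤ ∫⁻ t in Set.Ioi (1:ℝ), F t := lintegral_mono_set Set.Ioc_subset_Ioi_self
    rw [← Finset.sum_div] at h1
    linarith
  exact summable_of_sum_range_le hgnn hreal

/-- Discrete Φ-Douglas condition for an arbitrary circle homeomorphism, under the
integrability condition `∫₁^∞ Φ(t)/t³ dt < ∞` for a doubling N-function `Φ`.
The circle homeomorphism `φ : ∂𝔻 → ∂𝔻` is encoded by a lift `ψ : ℝ → ℝ`
(continuous, strictly monotone, `ψ(θ+2π) = ψ(θ) ± 2π`), so that
`φ (circleMap 0 1 θ) = circleMap 0 1 (ψ θ)`; the arclength of the image of the dyadic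
arc `I_{n,k}` is `|ψ(2π(k+1)/2ⁿ) − ψ(2πk/2ⁿ)|`. -/
theorem stmt5 (Φ : ℝ → ℝ) (hconv : ConvexOn ℝ (Set.Ici (0:ℝ)) Φ)
    (hmono : MonotoneOn Φ (Set.Ici (0:ℝ))) (h0 : Φ 0 = 0) (hnn : ∀ t, 0 ≤ Φ t)
    (hlim0 : Filter.Tendsto (fun t => Φ t / t) (nhdsWithin 0 (Set.Ioi (0:ℝ))) (nhds 0))
    (hliminf : Filter.Tendsto (fun t => Φ t / t) Filter.atTop Filter.atTop)
    (C_D : ℝ) (hCD : 2 ≤ C_D) (hD : ∀ t, 0 ≤ t → Φ (2 * t) ≤ C_D * Φ t)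
    (hint : (∫⁻ t in Set.Ioi (1 : ℝ), ENNReal.ofReal (Φ t / t ^ 3)) < ⊤)
    (ψ : ℝ → ℝ) (hψc : Continuous ψ) (hψm : StrictMono ψ ∨ StrictAnti ψ)
    (hper : (∀ θ, ψ (θ + 2 * Real.pi) = ψ θ + 2 * Real.pi) ∨
            (∀ θ, ψ (θ + 2 * Real.pi) = ψ θ - 2 * Real.pi)) :
    Summable fun n : ℕ => ∑ k ∈ Finset.range (2 ^ (n + 1)),
      Φ (|ψ (2 * Real.pi * ((k : ℝ) + 1) / 2 ^ (n + 1)) -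
            ψ (2 * Real.pi * (k : ℝ) / 2 ^ (n + 1))| * 2 ^ (n + 1)) *
        (2 : ℝ) ^ (-2 * ((n : ℤ) + 1)) := by
  have hC0 : (0:ℝ) < C_D := by linarith
  -- doubling applied three times
  have h8 : ∀ x : ℝ, 0 ≤ x → Φ (8 * x) ≤ C_D ^ 3 * Φ x := by
    intro x hx
    calc Φ (8 * x) = Φ (2 * (4 * x)) := by ring_nf
      _ ≤ C_D * Φ (4 * x) := hD _ (by linarith)
      _ = C_D * Φ (2 * (2 * x)) := by ring_nf
      _ ≤ C_D * (C_D * Φ (2 * x)) :=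
          mul_le_mul_of_nonneg_left (hD _ (by linarith)) hC0.le
      _ ≤ C_D * (C_D * (C_D * Φ x)) :=
          mul_le_mul_of_nonneg_left
            (mul_le_mul_of_nonneg_left (hD x hx) hC0.le) hC0.le
      _ = C_D ^ 3 * Φ x := by ring
  have hg := intsum Φ hmono hnn hint
  have hmaj : Summable fun n : ℕ =>
      C_D ^ 3 * (Φ ((2:ℝ) ^ (n+1)) * (2:ℝ) ^ (-2 * ((n+1 : ℕ) : ℤ))) :=
    (((summable_nat_add_iff 1).2 hg).mul_left _)
  apply Summable.of_nonneg_of_le _ _ hmaj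
  · intro n
    apply Finset.sum_nonneg
    intro k _
    have h1 := hnn (|ψ (2 * Real.pi * ((k : ℝ) + 1) / 2 ^ (n + 1)) -
            ψ (2 * Real.pi * (k : ℝ) / 2 ^ (n + 1))| * 2 ^ (n + 1))
    positivity
  · intro n
    have hz : (0:ℝ) < (2:ℝ) ^ (-2 * ((n : ℤ) + 1)) := by positivity
    rw [← Finset.sum_mul]
    have hsup : ∑ k ∈ Finset.range (2 ^ (n+1)),
        Φ (|ψ (2 * Real.pi * ((k : ℝ) + 1) / 2 ^ (n + 1)) -
            ψ (2 * Real.pi * (k : ℝ) / 2 ^ (n + 1))| * 2 ^ (n + 1)) ≤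
        Φ (2 * Real.pi * 2 ^ (n+1)) := by
      have h2 := supsum Φ hconv h0 (Finset.range (2 ^ (n+1)))
        (fun k => |ψ (2 * Real.pi * ((k : ℝ) + 1) / 2 ^ (n + 1)) -
            ψ (2 * Real.pi * (k : ℝ) / 2 ^ (n + 1))| * 2 ^ (n + 1))
        (fun k _ => by positivity)
      rw [← Finset.sum_mul, sumdelta ψ hψm hper (n+1)] at h2
      exact h2
    have hpi := Real.pi_pos
    have h2N : (0:ℝ) < (2:ℝ) ^ (n+1) := by positivity
    have hm1 : Φ (2 * Real.pi * 2 ^ (n+1)) ≤ Φ (8 * 2 ^ (n+1)) := by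
      apply hmono (Set.mem_Ici.2 (by positivity)) (Set.mem_Ici.2 (by positivity))
      have := Real.pi_le_four
      nlinarith
    have hm2 : Φ (8 * 2 ^ (n+1)) ≤ C_D ^ 3 * Φ ((2:ℝ) ^ (n+1)) := h8 _ (by positivity)
    have hzz : (2:ℝ) ^ (-2 * ((n : ℤ) + 1)) = (2:ℝ) ^ (-2 * ((n+1 : ℕ) : ℤ)) := by
      norm_cast
    calc (∑ k ∈ Finset.range (2 ^ (n+1)),
        Φ (|ψ (2 * Real.pi * ((k : ℝ) + 1) / 2 ^ (n + 1)) -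
            ψ (2 * Real.pi * (k : ℝ) / 2 ^ (n + 1))| * 2 ^ (n + 1))) *
          (2:ℝ) ^ (-2 * ((n : ℤ) + 1))
        ≤ (C_D ^ 3 * Φ ((2:ℝ) ^ (n+1))) * (2:ℝ) ^ (-2 * ((n : ℤ) + 1)) := by
          apply mul_le_mul_of_nonneg_right _ hz.le
          linarith
      _ = C_D ^ 3 * (Φ ((2:ℝ) ^ (n+1)) * (2:ℝ) ^ (-2 * ((n+1 : ℕ) : ℤ))) := by
          rw [hzz]; ring
end

section
/- Every homeomorphism φ : ∂𝔻 → ∂𝔻 satisfies the p-Douglas condition ∫_{∂𝔻}∫_{∂𝔻} (|φ(ξ)−φ(η)|/|ξ−η|)^p |dξ||dη| < ∞ for every p ∈ (1, 2). -/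
open MeasureTheory
open scoped ENNReal
open Real Set intervalIntegral

lemma dist_circleMap_eq (a b : ℝ) :
    dist (circleMap 0 1 a) (circleMap 0 1 b) = 2 * |Real.sin ((a - b) / 2)| := by
  have key : ∀ m d : ℂ, Complex.exp (m * Complex.I) * (2 * Complex.sin d * Complex.I)
      = Complex.exp ((m + d) * Complex.I) - Complex.exp ((m - d) * Complex.I) := by
    intro m d
    have h1 : Complex.exp (m * Complex.I) * Complex.exp (d * Complex.I)
        = Complex.exp ((m + d) * Complex.I) := by rw [← Complex.exp_add]; ring_nf
    have h2 : Complex.exp (m * Complex.I) * Complex.exp (-d * Complex.I)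
        = Complex.exp ((m - d) * Complex.I) := by rw [← Complex.exp_add]; ring_nf
    rw [Complex.sin]
    linear_combination h1 - h2 + Complex.exp (m * Complex.I) *
      (Complex.exp (-d * Complex.I) - Complex.exp (d * Complex.I)) * Complex.I_sq
  have e : circleMap 0 1 a - circleMap 0 1 b
      = Complex.exp ((((a + b) / 2 : ℝ)) * Complex.I) *
        (2 * Complex.sin (((a - b) / 2 : ℝ)) * Complex.I) := by
    rw [key]
    simp only [circleMap]
    push_cast
    ring_nf
  rw [Complex.dist_eq, e]
  rw [norm_mul, Complex.norm_exp_ofReal_mul_I, one_mul]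
  rw [norm_mul, norm_mul, Complex.norm_I, ← Complex.ofReal_sin, Complex.norm_real]
  norm_num
lemma meas_right (ψ : ℝ → ℝ) (hm : Monotone ψ) (a L s : ℝ) (hs : 0 < s)
    (hL : ψ (a + L) - ψ a ≤ 2 * π) :
    volume {y | y ∈ Ioc a (a + L) ∧ s * (y - a) ≤ ψ y - ψ a}
      ≤ ENNReal.ofReal ((ψ (a + 2 * π / s) - ψ a) / s) := by
  set w := 2 * π / s with hw
  have sub : {y | y ∈ Ioc a (a + L) ∧ s * (y - a) ≤ ψ y - ψ a}
      ⊆ Icc a (a + (ψ (a + w) - ψ a) / s) := by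
    rintro y ⟨⟨h1, h2⟩, h3⟩
    have hyw : y ≤ a + w := by
      have h4 : ψ y - ψ a ≤ 2 * π := le_trans (by have := hm h2; linarith) hL
      have : s * (y - a) ≤ 2 * π := le_trans h3 h4
      have h6 : y - a ≤ 2 * π / s := (le_div_iff₀ hs).mpr (by linarith [mul_comm s (y - a)])
      rw [hw]; linarith
    have h5 : ψ y ≤ ψ (a + w) := hm hyw
    refine ⟨h1.le, ?_⟩
    have h7 : s * (y - a) ≤ ψ (a + w) - ψ a := le_trans h3 (by linarith)
    have h8 : y - a ≤ (ψ (a + w) - ψ a) / s := (le_div_iff₀ hs).mpr (by linarith [mul_comm s (y - a)])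
    linarith
  calc volume _ ≤ volume (Icc a (a + (ψ (a + w) - ψ a) / s)) := measure_mono sub
    _ = ENNReal.ofReal ((ψ (a + w) - ψ a) / s) := by rw [Real.volume_Icc]; ring_nf

lemma meas_left (ψ : ℝ → ℝ) (hm : Monotone ψ) (a L s : ℝ) (hs : 0 < s)
    (hL : ψ a - ψ (a - L) ≤ 2 * π) :
    volume {y | y ∈ Ico (a - L) a ∧ s * (a - y) ≤ ψ a - ψ y}
      ≤ ENNReal.ofReal ((ψ a - ψ (a - 2 * π / s)) / s) := by
  set w := 2 * π / s with hw
  have sub : {y | y ∈ Ico (a - L) a ∧ s * (a - y) ≤ ψ a - ψ y}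
      ⊆ Icc (a - (ψ a - ψ (a - w)) / s) a := by
    rintro y ⟨⟨h1, h2⟩, h3⟩
    have hyw : a - w ≤ y := by
      have h4 : ψ a - ψ y ≤ 2 * π := le_trans (by have := hm h1; linarith) hL
      have : s * (a - y) ≤ 2 * π := le_trans h3 h4
      have h6 : a - y ≤ 2 * π / s := (le_div_iff₀ hs).mpr (by linarith [mul_comm s (a - y)])
      rw [hw]; linarith
    have h5 : ψ (a - w) ≤ ψ y := hm hyw
    refine ⟨?_, h2.le⟩
    have h7 : s * (a - y) ≤ ψ a - ψ (a - w) := le_trans h3 (by linarith)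
    have h8 : a - y ≤ (ψ a - ψ (a - w)) / s := (le_div_iff₀ hs).mpr (by linarith [mul_comm s (a - y)])
    linarith
  calc volume _ ≤ volume (Icc (a - (ψ a - ψ (a - w)) / s) a) := measure_mono sub
    _ = ENNReal.ofReal ((ψ a - ψ (a - w)) / s) := by rw [Real.volume_Icc]; ring_nf

lemma dist_circleMap_le (a b : ℝ) :
    dist (circleMap 0 1 a) (circleMap 0 1 b) ≤ |a - b| := by
  rw [dist_circleMap_eq a b]
  have h := Real.abs_sin_le_abs (x := (a - b) / 2)
  rw [abs_div] at h
  simp only [abs_two] at h ⊢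
  linarith [h]
lemma shift_integral (ψ : ℝ → ℝ) (hψc : Continuous ψ)
    (hper : ∀ θ, ψ (θ + 2 * π) = ψ θ + 2 * π) (w : ℝ) :
    ∫ θ in (0:ℝ)..(2 * π), (ψ (θ + w) - ψ (θ - w)) = 4 * π * w := by
  have hInt : ∀ a b : ℝ, IntervalIntegrable ψ volume a b := fun a b =>
    hψc.intervalIntegrable a b
  have h1 : ∫ θ in (0:ℝ)..(2 * π), ψ (θ + w) = ∫ x in w..(2 * π + w), ψ x := by
    simpa using integral_comp_add_right (a := (0:ℝ)) (b := 2 * π) ψ w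
  have h2 : ∫ θ in (0:ℝ)..(2 * π), ψ (θ - w) = ∫ x in (-w)..(2 * π - w), ψ x := by
    simpa [sub_eq_add_neg] using integral_comp_add_right (a := (0:ℝ)) (b := 2 * π) ψ (-w)
  have h3 : (∫ x in (-w)..w, ψ x) + ∫ x in w..(2 * π + w), ψ x = ∫ x in (-w)..(2 * π + w), ψ x :=
    integral_add_adjacent_intervals (hInt _ _) (hInt _ _)
  have h4 : (∫ x in (-w)..(2 * π - w), ψ x) + ∫ x in (2 * π - w)..(2 * π + w), ψ x
      = ∫ x in (-w)..(2 * π + w), ψ x :=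
    integral_add_adjacent_intervals (hInt _ _) (hInt _ _)
  have h5 : ∫ x in (2 * π - w)..(2 * π + w), ψ x = (∫ x in (-w)..w, ψ x) + 4 * π * w := by
    have h6 : ∫ x in (-w)..w, ψ (x + 2 * π) = ∫ x in (2 * π - w)..(2 * π + w), ψ x := by
      simpa [sub_eq_add_neg, add_comm] using
        integral_comp_add_right (a := -w) (b := w) ψ (2 * π)
    rw [← h6]
    have h7 : ∀ x, ψ (x + 2 * π) = ψ x + 2 * π := hper
    rw [show (fun x => ψ (x + 2 * π)) = fun x => ψ x + 2 * π from funext h7]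
    rw [integral_add (hInt _ _) (intervalIntegrable_const)]
    rw [intervalIntegral.integral_const]
    simp only [smul_eq_mul]
    ring
  rw [integral_sub
    ((Continuous.intervalIntegrable (by continuity : Continuous fun θ => ψ (θ + w)) _ _))
    ((Continuous.intervalIntegrable (by continuity : Continuous fun θ => ψ (θ - w)) _ _)), h1, h2]
  linarith [h3, h4, h5]
lemma jordan_half (u : ℝ) (h0 : 0 ≤ u) (h1 : u ≤ π) :
    2 / π * u ≤ 2 * |Real.sin (u / 2)| := by
  have h2 := Real.mul_le_sin (x := u / 2) (by linarith) (by linarith)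
  have h3 : 0 ≤ Real.sin (u / 2) :=
    Real.sin_nonneg_of_nonneg_of_le_pi (by linarith) (by linarith [Real.pi_pos])
  rw [abs_of_nonneg h3]
  calc 2 / π * u = 2 * (2 / π * (u / 2)) := by ring
    _ ≤ 2 * Real.sin (u / 2) := by linarith

lemma slice_est (ψ : ℝ → ℝ) (hm : Monotone ψ)
    (hper : ∀ θ, ψ (θ + 2 * π) = ψ θ + 2 * π)
    (x : ℝ) (hx : x ∈ Ioo 0 (2 * π)) (n : ℕ) :
    (volume.restrict (Ioo 0 (2 * π)))
      {y | π * 2 ^ n * dist (circleMap 0 1 x) (circleMap 0 1 y)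
            ≤ dist (circleMap 0 1 (ψ x)) (circleMap 0 1 (ψ y))
          ∧ 0 < dist (circleMap 0 1 x) (circleMap 0 1 y)}
    ≤ ENNReal.ofReal (2 * (ψ (x + 2 * π / 2 ^ (n + 1)) - ψ (x - 2 * π / 2 ^ (n + 1)))
        / 2 ^ (n + 1)) := by
  obtain ⟨hx0, hx2⟩ := hx
  set s : ℝ := 2 ^ (n + 1) with hsdef
  set w : ℝ := 2 * π / s with hwdef
  have hpi := Real.pi_pos
  have hs : (0:ℝ) < s := by positivity
  have hw0 : 0 ≤ w := by positivity
  -- periodicity facts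
  have hper' : ∀ θ, ψ (θ - 2 * π) = ψ θ - 2 * π := by
    intro θ
    have := hper (θ - 2 * π)
    rw [show θ - 2 * π + 2 * π = θ by ring] at this
    linarith
  have chain : ∀ u y', 2 / π * u ≤ dist (circleMap 0 1 x) (circleMap 0 1 y') →
      ∀ M, π * 2 ^ n * dist (circleMap 0 1 x) (circleMap 0 1 y')
            ≤ dist (circleMap 0 1 (ψ x)) (circleMap 0 1 (ψ y')) →
      dist (circleMap 0 1 (ψ x)) (circleMap 0 1 (ψ y')) ≤ M → s * u ≤ M := by
    intro u y' hd M hnum hn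
    calc s * u = π * 2 ^ n * (2 / π * u) := by field_simp [hsdef]; ring
      _ ≤ π * 2 ^ n * dist (circleMap 0 1 x) (circleMap 0 1 y') :=
          mul_le_mul_of_nonneg_left hd (by positivity)
      _ ≤ dist (circleMap 0 1 (ψ x)) (circleMap 0 1 (ψ y')) := hnum
      _ ≤ M := hn
  have hsub : {y | π * 2 ^ n * dist (circleMap 0 1 x) (circleMap 0 1 y)
            ≤ dist (circleMap 0 1 (ψ x)) (circleMap 0 1 (ψ y))
          ∧ 0 < dist (circleMap 0 1 x) (circleMap 0 1 y)} ∩ Ioo 0 (2 * π)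
      ⊆ ({y | y ∈ Ioc x (x + π) ∧ s * (y - x) ≤ ψ y - ψ x}
        ∪ {y | y ∈ Ico (x + 2 * π - π) (x + 2 * π) ∧
            s * (x + 2 * π - y) ≤ ψ (x + 2 * π) - ψ y})
        ∪ ({y | y ∈ Ico (x - π) x ∧ s * (x - y) ≤ ψ x - ψ y}
        ∪ {y | y ∈ Ioc (x - 2 * π) (x - 2 * π + π) ∧
            s * (y - (x - 2 * π)) ≤ ψ y - ψ (x - 2 * π)}) := by
    rintro y ⟨⟨hnum, hden⟩, hy0, hy2⟩
    have hxy : y ≠ x := by rintro rfl; simp at hden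
    have hden' : dist (circleMap 0 1 x) (circleMap 0 1 y) = 2 * |Real.sin ((x - y) / 2)| :=
      dist_circleMap_eq x y
    rcases lt_or_gt_of_ne hxy with hlt | hgt
    · -- y < x
      rcases le_or_gt (x - y) π with hle | hgtpi
      · -- case A'
        refine Or.inr (Or.inl ⟨⟨by linarith, hlt⟩, ?_⟩)
        refine chain (x - y) y ?_ _ hnum ?_
        · rw [hden']; exact jordan_half (x - y) (by linarith) hle
        · have h := dist_circleMap_le (ψ x) (ψ y)
          rwa [abs_of_nonneg (by linarith [hm hlt.le])] at h
      · -- case B'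
        refine Or.inr (Or.inr ⟨⟨by linarith, by linarith⟩, ?_⟩)
        refine chain (y - (x - 2 * π)) y ?_ _ hnum ?_
        · rw [hden']
          have heq : |Real.sin ((x - y) / 2)| = |Real.sin ((y - (x - 2 * π)) / 2)| := by
            rw [show (x - y) / 2 = π - (y - (x - 2 * π)) / 2 by ring, Real.sin_pi_sub]
          rw [heq]
          exact jordan_half _ (by linarith) (by linarith)
        · have hshift : circleMap 0 1 (ψ x) = circleMap 0 1 (ψ (x - 2 * π)) := by
            have h1 : ψ x = ψ (x - 2 * π) + 2 * π := by have := hper' x; linarith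
            rw [h1]
            exact (periodic_circleMap 0 1) (ψ (x - 2 * π))
          rw [hshift]
          have h := dist_circleMap_le (ψ (x - 2 * π)) (ψ y)
          rwa [abs_of_nonpos (by linarith [hm (show x - 2 * π ≤ y by linarith)]), neg_sub] at h
    · -- x < y
      rcases le_or_gt (y - x) π with hle | hgtpi
      · -- case A
        refine Or.inl (Or.inl ⟨⟨hgt, by linarith⟩, ?_⟩)
        refine chain (y - x) y ?_ _ hnum ?_
        · rw [hden']
          have heq : |Real.sin ((x - y) / 2)| = |Real.sin ((y - x) / 2)| := by
            rw [show (x - y) / 2 = -((y - x) / 2) by ring, Real.sin_neg, abs_neg]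
          rw [heq]
          exact jordan_half _ (by linarith) hle
        · have h := dist_circleMap_le (ψ x) (ψ y)
          rwa [abs_of_nonpos (by linarith [hm hgt.le]), neg_sub] at h
      · -- case B
        refine Or.inl (Or.inr ⟨⟨by linarith, by linarith⟩, ?_⟩)
        refine chain (x + 2 * π - y) y ?_ _ hnum ?_
        · rw [hden']
          have heq : |Real.sin ((x - y) / 2)| = |Real.sin ((x + 2 * π - y) / 2)| := by
            rw [show (x - y) / 2 = (x + 2 * π - y) / 2 - π by ring, Real.sin_sub_pi, abs_neg]
          rw [heq]
          exact jordan_half _ (by linarith) (by linarith)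
        · have hshift : circleMap 0 1 (ψ x) = circleMap 0 1 (ψ (x + 2 * π)) := by
            rw [hper x]
            exact ((periodic_circleMap 0 1) (ψ x)).symm
          rw [hshift]
          have h := dist_circleMap_le (ψ (x + 2 * π)) (ψ y)
          rwa [abs_of_nonneg (by linarith [hm (show y ≤ x + 2 * π by linarith)])] at h
  set a1 : ℝ := (ψ (x + w) - ψ x) / s with ha1def
  set b1 : ℝ := (ψ x - ψ (x - w)) / s with hb1def
  have ha1 : 0 ≤ a1 := div_nonneg (sub_nonneg.mpr (hm (by linarith))) hs.le
  have hb1 : 0 ≤ b1 := div_nonneg (sub_nonneg.mpr (hm (by linarith))) hs.le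
  have hA := meas_right ψ hm x π s hs
    (by linarith [hper x, hm (show x + π ≤ x + 2 * π by linarith)])
  have hB := meas_left ψ hm (x + 2 * π) π s hs
    (by linarith [hper x, hm (show x ≤ x + 2 * π - π by linarith)])
  have hA' := meas_left ψ hm x π s hs
    (by linarith [hper' x, hm (show x - 2 * π ≤ x - π by linarith)])
  have hB' := meas_right ψ hm (x - 2 * π) π s hs
    (by linarith [hper' x, hm (show x - 2 * π + π ≤ x by linarith)])
  have eB : (ψ (x + 2 * π) - ψ (x + 2 * π - 2 * π / s)) / s = b1 := by
    have e1 : ψ (x + 2 * π - 2 * π / s) = ψ (x - 2 * π / s) + 2 * π := by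
      rw [show x + 2 * π - 2 * π / s = (x - 2 * π / s) + 2 * π by ring, hper]
    rw [e1, hper x, hb1def, hwdef]; ring
  have eB' : (ψ (x - 2 * π + 2 * π / s) - ψ (x - 2 * π)) / s = a1 := by
    have e1 : ψ (x - 2 * π + 2 * π / s) = ψ (x + 2 * π / s) - 2 * π := by
      rw [show x - 2 * π + 2 * π / s = (x + 2 * π / s) - 2 * π by ring, hper']
    rw [e1, hper' x, ha1def, hwdef]; ring
  rw [eB] at hB
  rw [eB'] at hB'
  rw [Measure.restrict_apply' measurableSet_Ioo]
  refine le_trans (measure_mono hsub) ?_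
  refine le_trans (measure_union_le _ _) ?_
  refine le_trans (add_le_add (measure_union_le _ _) (measure_union_le _ _)) ?_
  refine le_trans (add_le_add (add_le_add hA hB) (add_le_add hA' hB')) ?_
  calc ENNReal.ofReal ((ψ (x + 2 * π / s) - ψ x) / s) + ENNReal.ofReal b1
        + (ENNReal.ofReal ((ψ x - ψ (x - 2 * π / s)) / s) + ENNReal.ofReal a1)
      = ENNReal.ofReal (a1 + b1 + (b1 + a1)) := by
        rw [← ENNReal.ofReal_add ha1 hb1, ← ENNReal.ofReal_add hb1 ha1,
          ← ENNReal.ofReal_add (add_nonneg ha1 hb1) (add_nonneg hb1 ha1)]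
    _ ≤ ENNReal.ofReal (2 * (ψ (x + w) - ψ (x - w)) / s) := by
        apply ENNReal.ofReal_le_ofReal
        rw [ha1def, hb1def]
        ring_nf
        exact le_refl _
lemma main_mono (p : ℝ) (hp1 : 1 < p) (hp2 : p < 2) (ψ : ℝ → ℝ) (hψc : Continuous ψ)
    (hm : Monotone ψ) (hper : ∀ θ, ψ (θ + 2 * π) = ψ θ + 2 * π) :
    (∫⁻ θ₁ in Set.Ioo (0:ℝ) (2 * π), ∫⁻ θ₂ in Set.Ioo (0:ℝ) (2 * π),
        ENNReal.ofReal ((dist (circleMap 0 1 (ψ θ₁)) (circleMap 0 1 (ψ θ₂)) /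
          dist (circleMap 0 1 θ₁) (circleMap 0 1 θ₂)) ^ p)) < ⊤ := by
  have hpi := Real.pi_pos
  have hp0 : (0:ℝ) ≤ p := by linarith
  set Q : Set ℝ := Ioo (0:ℝ) (2 * π) with hQ
  set μQ := volume.restrict Q with hμQ
  -- continuity of numerator and denominator
  have hdenc : Continuous fun z : ℝ × ℝ => dist (circleMap 0 1 z.1) (circleMap 0 1 z.2) :=
    Continuous.dist ((continuous_circleMap 0 1).comp continuous_fst)
      ((continuous_circleMap 0 1).comp continuous_snd)
  have hnumc : Continuous fun z : ℝ × ℝ =>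
      dist (circleMap 0 1 (ψ z.1)) (circleMap 0 1 (ψ z.2)) :=
    Continuous.dist ((continuous_circleMap 0 1).comp (hψc.comp continuous_fst))
      ((continuous_circleMap 0 1).comp (hψc.comp continuous_snd))
  have hG : Measurable fun z : ℝ × ℝ =>
      ENNReal.ofReal ((dist (circleMap 0 1 (ψ z.1)) (circleMap 0 1 (ψ z.2)) /
        dist (circleMap 0 1 z.1) (circleMap 0 1 z.2)) ^ p) := by
    exact ENNReal.measurable_ofReal.comp
      (((continuous_rpow_const hp0).measurable).comp
        (hnumc.measurable.div hdenc.measurable))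
  set S : ℕ → Set (ℝ × ℝ) := fun n =>
    {z : ℝ × ℝ | π * 2 ^ n * dist (circleMap 0 1 z.1) (circleMap 0 1 z.2)
        ≤ dist (circleMap 0 1 (ψ z.1)) (circleMap 0 1 (ψ z.2))
      ∧ 0 < dist (circleMap 0 1 z.1) (circleMap 0 1 z.2)} with hS
  have hSm : ∀ n, MeasurableSet (S n) := fun n =>
    (measurableSet_le ((continuous_const.mul hdenc).measurable) hnumc.measurable).inter
      (measurableSet_lt measurable_const hdenc.measurable)
  set K : ℝ≥0∞ := ENNReal.ofReal (4 * π ^ 2) with hK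
  set q : ℝ≥0∞ := ENNReal.ofReal ((2:ℝ) ^ p) with hq
  -- pointwise claim
  have claim : ∀ z : ℝ × ℝ,
      ENNReal.ofReal ((dist (circleMap 0 1 (ψ z.1)) (circleMap 0 1 (ψ z.2)) /
        dist (circleMap 0 1 z.1) (circleMap 0 1 z.2)) ^ p)
      ≤ K + ∑' n : ℕ, K * q ^ n * (S n).indicator (1 : ℝ × ℝ → ℝ≥0∞) z := by
    intro z
    set den := dist (circleMap 0 1 z.1) (circleMap 0 1 z.2) with hden
    set num := dist (circleMap 0 1 (ψ z.1)) (circleMap 0 1 (ψ z.2)) with hnum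
    set r := num / den with hr
    have hr0 : 0 ≤ r := div_nonneg dist_nonneg dist_nonneg
    have hpi1 : (1:ℝ) ≤ π := by linarith [Real.pi_gt_three]
    rcases le_or_gt r π with hle | hgt
    · refine le_trans ?_ le_self_add
      apply ENNReal.ofReal_le_ofReal
      calc r ^ p ≤ π ^ p := Real.rpow_le_rpow hr0 hle hp0
        _ ≤ π ^ (2:ℝ) := Real.rpow_le_rpow_of_exponent_le hpi1 hp2.le
        _ = π ^ 2 := Real.rpow_two π
        _ ≤ 4 * π ^ 2 := by nlinarith
    · set n : ℕ := ⌊Real.logb 2 (r / π)⌋₊ with hn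
      have hrpi : (1:ℝ) < r / π := (one_lt_div hpi).mpr hgt
      have hlog0 : 0 ≤ Real.logb 2 (r / π) := Real.logb_nonneg one_lt_two hrpi.le
      have hrb : r / π = (2:ℝ) ^ Real.logb 2 (r / π) :=
        (Real.rpow_logb (by norm_num) (by norm_num) (by linarith)).symm
      have h2 : (2:ℝ) ^ (n:ℝ) ≤ r / π := by
        rw [hrb]
        exact Real.rpow_le_rpow_of_exponent_le one_le_two (Nat.floor_le hlog0)
      have h3 : r / π < (2:ℝ) ^ ((n:ℝ) + 1) := by
        rw [hrb]
        exact Real.rpow_lt_rpow_of_exponent_lt one_lt_two (Nat.lt_floor_add_one _)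
      have h4 : π * 2 ^ n ≤ r := by
        rw [← Real.rpow_natCast (2:ℝ) n]
        calc π * (2:ℝ) ^ (n:ℝ) ≤ π * (r / π) :=
              mul_le_mul_of_nonneg_left h2 (by positivity)
          _ = r := by field_simp
      have h5 : r ≤ π * 2 ^ (n + 1) := by
        rw [← Real.rpow_natCast (2:ℝ) (n + 1)]
        push_cast
        calc r = π * (r / π) := by field_simp
          _ ≤ π * (2:ℝ) ^ ((n:ℝ) + 1) := mul_le_mul_of_nonneg_left h3.le (by positivity)
      have hdpos : 0 < den := by
        rcases lt_or_eq_of_le (dist_nonneg : (0:ℝ) ≤ den) with h' | h'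
        · exact h'
        · exfalso
          have hd0 : den = 0 := h'.symm
          have hgt' : π < num / den := hgt
          rw [hd0, div_zero] at hgt'
          linarith
      have hmem : z ∈ S n := by
        refine ⟨?_, hdpos⟩
        have hnd : num = r * den := (div_mul_cancel₀ _ hdpos.ne').symm
        show π * 2 ^ n * den ≤ num
        rw [hnd]
        exact mul_le_mul_of_nonneg_right h4 hdpos.le
      have hkey : r ^ p ≤ 4 * π ^ 2 * ((2:ℝ) ^ p) ^ n := by
        have e1 : ((2:ℝ) ^ (n + 1 : ℕ)) ^ p = (2:ℝ) ^ p * ((2:ℝ) ^ p) ^ n := by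
          rw [← Real.rpow_natCast (2:ℝ) (n + 1), ← Real.rpow_natCast ((2:ℝ) ^ p) n,
            ← Real.rpow_mul (by norm_num), ← Real.rpow_mul (by norm_num),
            ← Real.rpow_add (by norm_num)]
          congr 1
          push_cast
          ring
        have e2 : (2:ℝ) ^ p ≤ 4 := by
          calc (2:ℝ) ^ p ≤ (2:ℝ) ^ (2:ℝ) := Real.rpow_le_rpow_of_exponent_le one_le_two hp2.le
            _ = 4 := by rw [Real.rpow_two]; norm_num
        have e3 : (0:ℝ) < ((2:ℝ) ^ p) ^ n := by positivity
        calc r ^ p ≤ (π * 2 ^ (n + 1)) ^ p := Real.rpow_le_rpow hr0 h5 hp0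
          _ = π ^ p * ((2:ℝ) ^ (n + 1 : ℕ)) ^ p := Real.mul_rpow hpi.le (by positivity)
          _ = π ^ p * ((2:ℝ) ^ p * ((2:ℝ) ^ p) ^ n) := by rw [e1]
          _ ≤ π ^ (2:ℝ) * ((2:ℝ) ^ p * ((2:ℝ) ^ p) ^ n) := by
              have hππ : π ^ p ≤ π ^ (2:ℝ) := Real.rpow_le_rpow_of_exponent_le hpi1 hp2.le
              exact mul_le_mul_of_nonneg_right hππ (by positivity)
          _ ≤ π ^ (2:ℝ) * (4 * ((2:ℝ) ^ p) ^ n) := by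
              have t2 : (2:ℝ) ^ p * ((2:ℝ) ^ p) ^ n ≤ 4 * ((2:ℝ) ^ p) ^ n :=
                mul_le_mul_of_nonneg_right e2 e3.le
              exact mul_le_mul_of_nonneg_left t2 (Real.rpow_nonneg hpi.le 2)
          _ = 4 * π ^ 2 * ((2:ℝ) ^ p) ^ n := by rw [Real.rpow_two]; ring
      calc ENNReal.ofReal (r ^ p) ≤ ENNReal.ofReal (4 * π ^ 2 * ((2:ℝ) ^ p) ^ n) :=
            ENNReal.ofReal_le_ofReal hkey
        _ = K * q ^ n := by
            rw [hK, hq, ← ENNReal.ofReal_pow (by positivity), ← ENNReal.ofReal_mul (by positivity)]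
        _ = K * q ^ n * (S n).indicator (1 : ℝ × ℝ → ℝ≥0∞) z := by
            rw [Set.indicator_of_mem hmem, Pi.one_apply, mul_one]
        _ ≤ ∑' m : ℕ, K * q ^ m * (S m).indicator (1 : ℝ × ℝ → ℝ≥0∞) z := ENNReal.le_tsum n
        _ ≤ K + _ := le_add_self
  -- slice integral estimate
  have int_est : ∀ n : ℕ,
      (∫⁻ x in Q, ENNReal.ofReal (2 * (ψ (x + 2 * π / 2 ^ (n + 1)) - ψ (x - 2 * π / 2 ^ (n + 1)))
        / 2 ^ (n + 1)) ∂volume)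
      = ENNReal.ofReal (4 * π ^ 2 * ((4:ℝ)⁻¹) ^ n) := by
    intro n
    set s : ℝ := 2 ^ (n + 1) with hs
    set w : ℝ := 2 * π / s with hw
    have hs0 : (0:ℝ) < s := by positivity
    have hw0 : (0:ℝ) ≤ w := by positivity
    have hcont : Continuous fun x => 2 * (ψ (x + w) - ψ (x - w)) / s := by
      apply Continuous.div_const
      apply Continuous.mul continuous_const
      exact (hψc.comp (by continuity)).sub (hψc.comp (by continuity))
    have hint : IntegrableOn (fun x => 2 * (ψ (x + w) - ψ (x - w)) / s) Q := by
      rw [hQ]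
      exact (hcont.integrableOn_Icc (a := 0) (b := 2 * π)).mono_set Ioo_subset_Icc_self
    have hnn : (0:ℝ → ℝ) ≤ᵐ[volume.restrict Q] fun x => 2 * (ψ (x + w) - ψ (x - w)) / s := by
      apply Filter.Eventually.of_forall
      intro x
      have h9 : ψ (x - w) ≤ ψ (x + w) := hm (by linarith)
      exact div_nonneg (by linarith) hs0.le
    rw [← ofReal_integral_eq_lintegral_ofReal hint hnn]
    congr 1
    have e0 : ∫ x in Q, 2 * (ψ (x + w) - ψ (x - w)) / s
        = ∫ x in (0:ℝ)..(2 * π), 2 * (ψ (x + w) - ψ (x - w)) / s := by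
      rw [hQ, intervalIntegral.integral_of_le (by linarith), integral_Ioc_eq_integral_Ioo]
    rw [e0]
    have e1 : ∫ x in (0:ℝ)..(2 * π), 2 * (ψ (x + w) - ψ (x - w)) / s
        = (2 / s) * ∫ x in (0:ℝ)..(2 * π), (ψ (x + w) - ψ (x - w)) := by
      rw [← intervalIntegral.integral_const_mul]
      congr 1
      funext x
      ring
    rw [e1, shift_integral ψ hψc hper w]
    rw [hw, hs, inv_pow]
    rw [show (4:ℝ) ^ n = 2 ^ (n * 2) from by
      rw [show (4:ℝ) = 2 ^ 2 by norm_num, ← pow_mul, mul_comm]]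
    have h2n : (0:ℝ) < (2:ℝ) ^ (n * 2) := by positivity
    have h2n1 : (0:ℝ) < (2:ℝ) ^ (n + 1) := by positivity
    field_simp
    ring
  -- product measure
  have hμ2 : ∀ n : ℕ, (μQ.prod μQ) (S n) ≤ ENNReal.ofReal (4 * π ^ 2 * ((4:ℝ)⁻¹) ^ n) := by
    intro n
    rw [Measure.prod_apply (hSm n)]
    calc ∫⁻ x, μQ (Prod.mk x ⁻¹' S n) ∂μQ
        ≤ ∫⁻ x, ENNReal.ofReal (2 * (ψ (x + 2 * π / 2 ^ (n + 1)) - ψ (x - 2 * π / 2 ^ (n + 1)))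
            / 2 ^ (n + 1)) ∂μQ := by
          apply lintegral_mono_ae
          filter_upwards [ae_restrict_mem measurableSet_Ioo] with x hx
          exact slice_est ψ hm hper x hx n
      _ = ENNReal.ofReal (4 * π ^ 2 * ((4:ℝ)⁻¹) ^ n) := int_est n
  -- assemble
  rw [← lintegral_prod _ hG.aemeasurable]
  have step : ∫⁻ z, ENNReal.ofReal ((dist (circleMap 0 1 (ψ z.1)) (circleMap 0 1 (ψ z.2)) /
        dist (circleMap 0 1 z.1) (circleMap 0 1 z.2)) ^ p) ∂(μQ.prod μQ)
      ≤ K * (μQ.prod μQ) univ + ∑' n : ℕ, K * q ^ n * (μQ.prod μQ) (S n) := by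
    calc _ ≤ ∫⁻ z, (K + ∑' n : ℕ, K * q ^ n * (S n).indicator (1 : ℝ × ℝ → ℝ≥0∞) z)
          ∂(μQ.prod μQ) := lintegral_mono claim
      _ = K * (μQ.prod μQ) univ
          + ∫⁻ z, ∑' n : ℕ, K * q ^ n * (S n).indicator (1 : ℝ × ℝ → ℝ≥0∞) z
            ∂(μQ.prod μQ) := by
          rw [lintegral_add_left measurable_const, lintegral_const]
      _ = K * (μQ.prod μQ) univ + ∑' n : ℕ, K * q ^ n * (μQ.prod μQ) (S n) := by
          congr 1
          rw [lintegral_tsum fun n =>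
            (((measurable_one.indicator (hSm n))).const_mul (K * q ^ n)).aemeasurable]
          refine tsum_congr fun n => ?_
          rw [lintegral_const_mul _ (measurable_one.indicator (hSm n)),
            lintegral_indicator_one (hSm n)]
  refine lt_of_le_of_lt step ?_
  have huniv : (μQ.prod μQ) univ < ⊤ := by
    rw [← univ_prod_univ, Measure.prod_prod, hμQ, Measure.restrict_apply_univ, hQ,
      Real.volume_Ioo]
    exact ENNReal.mul_lt_top ENNReal.ofReal_lt_top ENNReal.ofReal_lt_top
  have hsum : (∑' n : ℕ, K * q ^ n * (μQ.prod μQ) (S n)) < ⊤ := by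
    set ρ : ℝ≥0∞ := ENNReal.ofReal ((2:ℝ) ^ p * 4⁻¹) with hρ
    have hρ1 : ρ < 1 := by
      rw [hρ]
      apply ENNReal.ofReal_lt_one.mpr
      have : (2:ℝ) ^ p < (2:ℝ) ^ (2:ℝ) := Real.rpow_lt_rpow_of_exponent_lt one_lt_two hp2
      rw [Real.rpow_two] at this
      nlinarith [Real.rpow_pos_of_pos (show (0:ℝ) < 2 by norm_num) p]
    have hbound : ∀ n : ℕ, K * q ^ n * (μQ.prod μQ) (S n) ≤ K * K * ρ ^ n := by
      intro n
      have h1 : (μQ.prod μQ) (S n) ≤ K * ENNReal.ofReal (((4:ℝ)⁻¹) ^ n) := by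
        refine le_trans (hμ2 n) ?_
        rw [hK, ← ENNReal.ofReal_mul (by positivity)]
      calc K * q ^ n * (μQ.prod μQ) (S n) ≤ K * q ^ n * (K * ENNReal.ofReal (((4:ℝ)⁻¹) ^ n)) :=
            mul_le_mul_right h1 _
        _ = K * K * (q ^ n * ENNReal.ofReal (((4:ℝ)⁻¹) ^ n)) := by ring
        _ = K * K * ρ ^ n := by
            congr 1
            rw [hq, hρ, ← ENNReal.ofReal_pow (by positivity), ← ENNReal.ofReal_pow (by positivity),
              ← ENNReal.ofReal_mul (by positivity), ← mul_pow]
    calc (∑' n : ℕ, K * q ^ n * (μQ.prod μQ) (S n)) ≤ ∑' n : ℕ, K * K * ρ ^ n :=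
          ENNReal.tsum_le_tsum hbound
      _ = K * K * (1 - ρ)⁻¹ := by rw [ENNReal.tsum_mul_left, ENNReal.tsum_geometric]
      _ < ⊤ := by
          apply ENNReal.mul_lt_top (ENNReal.mul_lt_top ENNReal.ofReal_lt_top ENNReal.ofReal_lt_top)
          rw [ENNReal.inv_lt_top]
          exact tsub_pos_iff_lt.mpr hρ1
  exact ENNReal.add_lt_top.mpr ⟨ENNReal.mul_lt_top ENNReal.ofReal_lt_top huniv, hsum⟩
/-- Every circle homeomorphism satisfies the p-Douglas condition for `1 < p < 2`.
The homeomorphism `φ : ∂𝔻 → ∂𝔻` is encoded by a continuous strictly monotone lift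
`ψ : ℝ → ℝ` with `ψ(θ+2π) = ψ(θ) ± 2π`, so that
`φ (circleMap 0 1 θ) = circleMap 0 1 (ψ θ)`. -/
theorem stmt19 (p : ℝ) (hp1 : 1 < p) (hp2 : p < 2)
    (ψ : ℝ → ℝ) (hψc : Continuous ψ) (hψm : StrictMono ψ ∨ StrictAnti ψ)
    (hper : (∀ θ, ψ (θ + 2 * Real.pi) = ψ θ + 2 * Real.pi) ∨
            (∀ θ, ψ (θ + 2 * Real.pi) = ψ θ - 2 * Real.pi)) :
    (∫⁻ θ₁ in Set.Ioo (0:ℝ) (2 * Real.pi), ∫⁻ θ₂ in Set.Ioo (0:ℝ) (2 * Real.pi),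
        ENNReal.ofReal ((dist (circleMap 0 1 (ψ θ₁)) (circleMap 0 1 (ψ θ₂)) /
          dist (circleMap 0 1 θ₁) (circleMap 0 1 θ₂)) ^ p)) < ⊤ := by
  have hpi := Real.pi_pos
  rcases hper with hper | hper
  · exact main_mono p hp1 hp2 ψ hψc
      (by
        rcases hψm with hmono | hanti
        · exact hmono.monotone
        · exfalso
          have h1 := hanti (show (0:ℝ) < 0 + 2 * π by linarith)
          rw [hper 0] at h1
          linarith)
      hper
  · -- use χ = -ψ
    rcases hψm with hmono | hanti
    · exfalso
      have h1 := hmono (show (0:ℝ) < 0 + 2 * π by linarith)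
      rw [hper 0] at h1
      linarith
    · have key := main_mono p hp1 hp2 (fun θ => -ψ θ) (hψc.neg)
        (fun a b hab => by simp only [neg_le_neg_iff]; exact hanti.antitone hab)
        (fun θ => by simp only [hper θ]; ring)
      have heq : ∀ a b : ℝ, dist (circleMap 0 1 (-a)) (circleMap 0 1 (-b))
          = dist (circleMap 0 1 a) (circleMap 0 1 b) := by
        intro a b
        rw [dist_circleMap_eq, dist_circleMap_eq,
          show (-a - -b) / 2 = -((a - b) / 2) by ring, Real.sin_neg, abs_neg]
      convert key using 1
      refine lintegral_congr fun x => lintegral_congr fun y => ?_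
      rw [heq (ψ x) (ψ y)]
end
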